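/- Let n ≥ 1 and let p_1, …, p_n be the n distinct complex roots of f_n. Then for each k ∈ {1,…,n}, (2/n)·∑_{j≠k} 1/(p_k − p_j) − 2/(p_k − 1) + 1/(n·p_k) = 0. -/

import Mathlib

open Polynomial

/-- The polynomial `f_n(z) = ∑_{j=0}^n (binom(n,j))^2 z^j` with complex coefficients. -/
noncomputable def hyperPoly (n : ℕ) : Polynomial ℂ :=
  ∑ j ∈ Finset.range (n + 1), Polynomial.C ((n.choose j : ℂ) ^ 2) * Polynomial.X ^ j

lemma hyperPoly_coeff (n m : ℕ) : (hyperPoly n).coeff m = ((n.choose m : ℂ)) ^ 2 := by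
  unfold hyperPoly
  rw [Polynomial.finset_sum_coeff]
  simp only [Polynomial.coeff_C_mul, Polynomial.coeff_X_pow, mul_ite, mul_one, mul_zero]
  rw [Finset.sum_ite_eq (Finset.range (n + 1)) m]
  by_cases h : m ∈ Finset.range (n + 1)
  · simp [h]
  · have : n < m := by simpa using h
    simp [h, Nat.choose_eq_zero_of_lt this]

lemma choose_key (n m : ℕ) :
    ((m : ℂ) + 1) ^ 2 * ((n.choose (m + 1) : ℂ)) ^ 2
      = ((n : ℂ) - (m : ℂ)) ^ 2 * ((n.choose m : ℂ)) ^ 2 := by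
  have h : ((n.choose (m + 1) : ℂ)) * ((m : ℂ) + 1)
      = ((n.choose m : ℂ)) * ((n : ℂ) - (m : ℂ)) := by
    rcases le_or_gt m n with h1 | h1
    · have h3 := congrArg (fun x : ℕ => (x : ℂ)) (Nat.choose_succ_right_eq n m)
      push_cast [Nat.cast_sub h1] at h3
      linear_combination h3
    · simp [Nat.choose_eq_zero_of_lt h1,
        Nat.choose_eq_zero_of_lt (h1.trans (Nat.lt_succ_self m))]
  linear_combination (((n.choose (m + 1)) : ℂ) * ((m : ℂ) + 1)
    + ((n.choose m : ℂ)) * ((n : ℂ) - (m : ℂ))) * h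

/-- The hypergeometric ODE satisfied by `hyperPoly n`. -/
lemma hyperPoly_ode (n : ℕ) :
    X ^ 2 * derivative (derivative (hyperPoly n))
      - X * derivative (derivative (hyperPoly n))
      - C (2 * (n : ℂ) - 1) * (X * derivative (hyperPoly n))
      - derivative (hyperPoly n)
      + C ((n : ℂ) ^ 2) * hyperPoly n = 0 := by
  ext m
  rcases m with _ | _ | m
  · simp only [coeff_add, coeff_sub, mul_coeff_zero, coeff_X_pow, coeff_X_zero,
      coeff_C_zero, coeff_C_mul, coeff_derivative, hyperPoly_coeff, coeff_zero]
    norm_num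
  · simp only [coeff_add, coeff_sub, coeff_C_mul, coeff_derivative, hyperPoly_coeff,
      coeff_zero, pow_two, mul_assoc, Polynomial.coeff_X_mul, Polynomial.mul_coeff_zero,
      Polynomial.coeff_X_zero, zero_mul]
    have hck := choose_key n 1
    push_cast at hck
    norm_num at hck ⊢
    linear_combination -hck
  · have h2 : m + 1 + 1 = m + 2 := rfl
    simp only [coeff_add, coeff_sub, coeff_C_mul, pow_two, mul_assoc,
      Polynomial.coeff_X_mul, coeff_derivative, hyperPoly_coeff, coeff_zero]
    push_cast
    have hck := choose_key n (m + 2)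
    push_cast at hck
    simp only [show m + 1 + 1 = m + 2 from rfl, show m + 1 + 1 + 1 = m + 3 from rfl,
      show m + 2 + 1 = m + 3 from rfl] at hck ⊢
    linear_combination -hck

lemma derivative_finset_prod {ι : Type*} [DecidableEq ι] (s : Finset ι) (f : ι → Polynomial ℂ) :
    derivative (∏ i ∈ s, f i) = ∑ i ∈ s, (∏ j ∈ s.erase i, f j) * derivative (f i) := by
  induction s using Finset.induction with
  | empty => simp
  | @insert a s ha ih =>
    rw [Finset.prod_insert ha, derivative_mul, ih, Finset.sum_insert ha,
      Finset.erase_insert ha, Finset.mul_sum]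
    congr 1
    · ring
    · apply Finset.sum_congr rfl
      intro i hi
      have hai : a ≠ i := by rintro rfl; exact ha hi
      rw [Finset.erase_insert_of_ne hai,
        Finset.prod_insert (fun h => ha (Finset.mem_of_mem_erase h))]
      ring

/-- Let `n ≥ 1` and let `p 1, …, p n` be the `n` distinct complex roots of `f_n`.
Then for each `k`, `(2/n)·∑_{j≠k} 1/(p_k − p_j) − 2/(p_k − 1) + 1/(n·p_k) = 0`. -/
theorem stmt_7 (n : ℕ) (hn : 1 ≤ n)
    (p : Fin n → ℂ) (hp : Function.Injective p)
    (hroots : hyperPoly n = ∏ j, (Polynomial.X - Polynomial.C (p j)))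
    (k : Fin n) :
    (2 / (n : ℂ)) * (∑ j ∈ Finset.univ.erase k, 1 / (p k - p j))
      - 2 / (p k - 1) + 1 / ((n : ℂ) * p k) = 0 := by
  classical
  set q := p k with hq
  set S : ℂ := ∑ j ∈ Finset.univ.erase k, 1 / (p k - p j) with hSdef
  set D : ℂ := ∏ j ∈ Finset.univ.erase k, (p k - p j) with hDdef
  have hne : ∀ j : Fin n, j ≠ k → p k - p j ≠ 0 := by
    intro j hj
    rw [sub_ne_zero]
    exact fun h => hj (hp h).symm
  have hD : D ≠ 0 := by
    rw [hDdef, Finset.prod_ne_zero_iff]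
    exact fun j hj => hne j (Finset.ne_of_mem_erase hj)
  -- first derivative evaluation
  have hd1 : derivative (hyperPoly n)
      = ∑ i, (∏ j ∈ Finset.univ.erase i, (X - C (p j))) := by
    rw [hroots, derivative_finset_prod]
    simp
  have hE1 : eval q (derivative (hyperPoly n)) = D := by
    rw [hd1, eval_finset_sum]
    rw [Finset.sum_eq_single k]
    · simp [hDdef, eval_prod, hq]
    · intro i _ hik
      rw [eval_prod]
      exact Finset.prod_eq_zero (Finset.mem_erase.mpr ⟨fun h => hik h.symm, Finset.mem_univ k⟩)
        (by simp [hq])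
    · simp
  -- second derivative evaluation
  have hd2 : eval q (derivative (derivative (hyperPoly n))) = 2 * (D * S) := by
    rw [hd1, derivative_sum]
    have hterm : ∀ i : Fin n, derivative (∏ j ∈ Finset.univ.erase i, (X - C (p j)))
        = ∑ j ∈ Finset.univ.erase i,
            ∏ l ∈ (Finset.univ.erase i).erase j, (X - C (p l)) := by
      intro i
      rw [derivative_finset_prod]
      simp
    rw [Finset.sum_congr rfl fun i _ => hterm i, eval_finset_sum]
    -- P j
    set P : Fin n → ℂ := fun j => ∏ l ∈ (Finset.univ.erase k).erase j, (p k - p l) with hP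
    have hPeval : ∀ i : Fin n,
        eval q (∑ j ∈ Finset.univ.erase i,
          ∏ l ∈ (Finset.univ.erase i).erase j, (X - C (p l)))
        = ∑ j ∈ Finset.univ.erase i,
            ∏ l ∈ (Finset.univ.erase i).erase j, (p k - p l) := by
      intro i
      rw [eval_finset_sum]
      exact Finset.sum_congr rfl fun j _ => by simp [eval_prod, hq]
    rw [Finset.sum_congr rfl fun i _ => hPeval i]
    have hsplit : (∑ i : Fin n, ∑ j ∈ Finset.univ.erase i,
          ∏ l ∈ (Finset.univ.erase i).erase j, (p k - p l))
        = (∑ j ∈ Finset.univ.erase k, P j) + ∑ i ∈ Finset.univ.erase k, P i := by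
      rw [← Finset.add_sum_erase _ _ (Finset.mem_univ k)]
      congr 1
      apply Finset.sum_congr rfl
      intro i hi
      have hik : i ≠ k := Finset.ne_of_mem_erase hi
      rw [Finset.sum_eq_single k]
      · rw [hP]
        congr 1
        rw [Finset.erase_right_comm]
      · intro j hj hjk
        exact Finset.prod_eq_zero
          (Finset.mem_erase.mpr ⟨fun h => hjk h.symm,
            Finset.mem_erase.mpr ⟨fun h => hik h.symm, Finset.mem_univ k⟩⟩) (by simp)
      · intro hk
        exact absurd (Finset.mem_erase.mpr ⟨hik.symm, Finset.mem_univ k⟩) hk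
    rw [hsplit]
    have hPj : ∀ j ∈ Finset.univ.erase k, P j = D * (1 / (p k - p j)) := by
      intro j hj
      have hmul : (p k - p j) * P j = D := by
        have h0 := Finset.mul_prod_erase (Finset.univ.erase k) (fun l => p k - p l) hj
        rw [← hDdef] at h0
        simp only [hP]
        exact h0
      have hx : p k - p j ≠ 0 := hne j (Finset.ne_of_mem_erase hj)
      field_simp
      linear_combination hmul
    rw [Finset.sum_congr rfl hPj, ← Finset.mul_sum, ← hSdef]
    ring
  -- f vanishes at q
  have hF0 : eval q (hyperPoly n) = 0 := by
    rw [hroots, eval_prod]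
    exact Finset.prod_eq_zero (Finset.mem_univ k) (by simp [hq])
  -- evaluate the ODE at q
  have hODE := congrArg (eval q) (hyperPoly_ode n)
  simp only [eval_add, eval_sub, eval_mul, eval_pow, eval_X, eval_C, eval_zero,
    hE1, hd2, hF0, mul_zero] at hODE
  -- hODE : q^2 * (2*(D*S)) - q * (2*(D*S)) - (2n-1)*(q*D) - D + 0 = 0
  have hrel : 2 * q ^ 2 * S - 2 * q * S - (2 * (n : ℂ) - 1) * q - 1 = 0 := by
    apply mul_left_cancel₀ hD
    linear_combination hODE
  -- nonvanishing facts
  have hn0 : (n : ℂ) ≠ 0 := Nat.cast_ne_zero.mpr (by omega)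
  have hq0 : q ≠ 0 := by
    intro h
    have h1 : eval 0 (hyperPoly n) = 1 := by
      rw [← Polynomial.coeff_zero_eq_eval_zero, hyperPoly_coeff]
      simp
    have h2 : eval 0 (hyperPoly n) = 0 := by
      rw [hroots, eval_prod]
      exact Finset.prod_eq_zero (Finset.mem_univ k) (by simp [← hq, h])
    rw [h1] at h2
    exact one_ne_zero h2
  have hq1 : q - 1 ≠ 0 := by
    rw [sub_ne_zero]
    intro h
    have h1 : eval 1 (hyperPoly n) = ((∑ j ∈ Finset.range (n + 1), (n.choose j) ^ 2 : ℕ) : ℂ) := by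
      unfold hyperPoly
      rw [eval_finset_sum]
      push_cast
      simp
    have hpos : 0 < ∑ j ∈ Finset.range (n + 1), (n.choose j) ^ 2 := by
      apply Finset.sum_pos'
      · intro i _; positivity
      · exact ⟨0, Finset.mem_range.mpr (by omega), by simp⟩
    have h2 : eval 1 (hyperPoly n) = 0 := by
      rw [hroots, eval_prod]
      exact Finset.prod_eq_zero (Finset.mem_univ k) (by simp [← hq, ← h])
    rw [h1] at h2
    exact (Nat.cast_ne_zero.mpr hpos.ne') h2
  -- final algebra
  have hfinal : (2 / (n : ℂ)) * S - 2 / (q - 1) + 1 / ((n : ℂ) * q)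
      = (2 * q ^ 2 * S - 2 * q * S - (2 * (n : ℂ) - 1) * q - 1) / ((n : ℂ) * q * (q - 1)) := by
    field_simp
    ring
  calc (2 / (n : ℂ)) * S - 2 / (q - 1) + 1 / ((n : ℂ) * q)
      = (2 * q ^ 2 * S - 2 * q * S - (2 * (n : ℂ) - 1) * q - 1) / ((n : ℂ) * q * (q - 1)) := hfinal
    _ = 0 := by rw [hrel, zero_div]
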